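/- Let k(x,y) be a positive semi-definite symmetric real-valued kernel on a set X. Then for any n ∈ ℕ, the pointwise power k(x,y)^n is also a positive semi-definite symmetric kernel. -/

import Mathlib

/-- Pointwise powers of a symmetric positive semi-definite real kernel are
symmetric positive semi-definite kernels. -/
theorem kernel_pow_posSemidef {X : Type*} (k : X → X → ℝ)
    (hsymm : ∀ x y, k x y = k y x)
    (hpsd : ∀ (M : ℕ) (x : Fin M → X) (a : Fin M → ℝ),
      0 ≤ ∑ i, ∑ j, a i * a j * k (x i) (x j))
    (n : ℕ) :
    (∀ x y, k x y ^ n = k y x ^ n) ∧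
    (∀ (M : ℕ) (x : Fin M → X) (a : Fin M → ℝ),
      0 ≤ ∑ i, ∑ j, a i * a j * k (x i) (x j) ^ n) := by
  refine ⟨fun x y => by rw [hsymm], ?_⟩
  induction n with
  | zero =>
    intro M x a
    simp only [pow_zero, mul_one]
    have : ∑ i, ∑ j, a i * a j = (∑ i, a i) ^ 2 := by
      rw [sq, Finset.sum_mul_sum]
    rw [this]
    positivity
  | succ n ih =>
    intro M x a
    -- the Gram matrix of k on the points x
    set A : Matrix (Fin M) (Fin M) ℝ := Matrix.of fun i j => k (x i) (x j) with hA
    have hApsd : A.PosSemidef := by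
      refine Matrix.posSemidef_iff_dotProduct_mulVec.mpr ⟨?_, ?_⟩
      · ext i j
        simp [Matrix.conjTranspose, hA, hsymm (x j) (x i)]
      · intro v
        refine le_of_le_of_eq (hpsd M x v) ?_
        simp only [dotProduct, Matrix.mulVec, Matrix.of_apply, hA, star_trivial,
          Finset.mul_sum]
        refine Finset.sum_congr rfl fun i _ => Finset.sum_congr rfl fun j _ => by ring
    obtain ⟨m, v, hv⟩ := Matrix.posSemidef_iff_eq_sum_vecMulVec.mp hApsd
    obtain ⟨B, hB⟩ : ∃ B : Matrix (Fin m) (Fin M) ℝ, A = B.conjTranspose * B :=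
      ⟨Matrix.of fun r i => v r i, by
        ext i j; simp [hv, Matrix.mul_apply, Matrix.sum_apply, Matrix.vecMulVec_apply]⟩
    have hAij : ∀ i j, k (x i) (x j) = ∑ r, B r i * B r j := by
      intro i j
      have := congrFun (congrFun hB i) j
      simpa [hA, Matrix.mul_apply, Matrix.conjTranspose_apply] using this
    calc (0:ℝ) ≤ ∑ r, ∑ i, ∑ j, (a i * B r i) * (a j * B r j) * k (x i) (x j) ^ n := by
          apply Finset.sum_nonneg
          intro r _
          exact ih M x (fun i => a i * B r i)
      _ = ∑ i, ∑ j, a i * a j * k (x i) (x j) ^ (n + 1) := by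
          rw [Finset.sum_comm]
          refine Finset.sum_congr rfl fun i _ => ?_
          rw [Finset.sum_comm]
          refine Finset.sum_congr rfl fun j _ => ?_
          rw [pow_succ']
          simp only [hAij i j, Finset.sum_mul, Finset.mul_sum]
          refine Finset.sum_congr rfl fun r _ => ?_
          ring
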